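/- Let W, Q : ℝ^{m×d} → ℝ with Q ≤ W, Q rank-one convex (convex along rank-one lines), W differentiable. Suppose F₊ − F₋ = a⊗n is rank one and Q(t F₊ + (1−t) F₋) = t W(F₊) + (1−t) W(F₋) holds for all t ∈ [0,1]. Then ⟨W_F(F₊), F₊−F₋⟩ = W(F₊) − W(F₋) = ⟨W_F(F₋), F₊−F₋⟩; in particular 𝔑 = ⟨W_F(F₊) − W_F(F₋), F₊−F₋⟩ = 0 and the Maxwell driving force p* = 0. -/

import Mathlib

open Matrix

/-- Frobenius inner product of two `m × d` real matrices. -/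
noncomputable def frob {m d : ℕ} (A B : Matrix (Fin m) (Fin d) ℝ) : ℝ :=
  ∑ i, ∑ j, A i j * B i j

/-- Weierstrass excess function `W°(F,H) = W(F+H) - W(F) - ⟨P(F), H⟩`,
where `P` is the (matrix representation of the) derivative of `W`. -/
noncomputable def Wex {m d : ℕ} (W : Matrix (Fin m) (Fin d) ℝ → ℝ)
    (P : Matrix (Fin m) (Fin d) ℝ → Matrix (Fin m) (Fin d) ℝ)
    (F H : Matrix (Fin m) (Fin d) ℝ) : ℝ :=
  W (F + H) - W F - frob (P F) H

lemma frob_sub_left {m d : ℕ} (A B H : Matrix (Fin m) (Fin d) ℝ) :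
    frob (A - B) H = frob A H - frob B H := by
  simp [frob, sub_mul, Finset.sum_sub_distrib]

lemma frob_add_left {m d : ℕ} (A B H : Matrix (Fin m) (Fin d) ℝ) :
    frob (A + B) H = frob A H + frob B H := by
  simp [frob, add_mul, Finset.sum_add_distrib]

lemma frob_smul_left {m d : ℕ} (r : ℝ) (A H : Matrix (Fin m) (Fin d) ℝ) :
    frob (r • A) H = r * frob A H := by
  simp [frob, Finset.mul_sum, mul_assoc]

theorem stmt7 {m d : ℕ} (W Q : Matrix (Fin m) (Fin d) ℝ → ℝ)
    (P : Matrix (Fin m) (Fin d) ℝ → Matrix (Fin m) (Fin d) ℝ)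
    (hP : ∀ F H, HasDerivAt (fun t : ℝ => W (F + t • H)) (frob (P F) H) 0)
    (hle : ∀ F, Q F ≤ W F)
    (hr1 : ∀ (F : Matrix (Fin m) (Fin d) ℝ) (u : Fin m → ℝ) (v : Fin d → ℝ),
      ConvexOn ℝ Set.univ (fun t : ℝ => Q (F + t • vecMulVec u v)))
    (Fp Fm : Matrix (Fin m) (Fin d) ℝ) (a : Fin m → ℝ) (n : Fin d → ℝ)
    (hcomp : Fp - Fm = vecMulVec a n)
    (haff : ∀ t ∈ Set.Icc (0:ℝ) 1,
      Q (t • Fp + (1 - t) • Fm) = t * W Fp + (1 - t) * W Fm) :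
    frob (P Fp) (Fp - Fm) = W Fp - W Fm ∧
    frob (P Fm) (Fp - Fm) = W Fp - W Fm ∧
    frob (P Fp - P Fm) (Fp - Fm) = 0 ∧
    (W Fp - W Fm) - frob ((1/2 : ℝ) • (P Fp + P Fm)) (Fp - Fm) = 0 := by
  set H : Matrix (Fin m) (Fin d) ℝ := Fp - Fm with hH
  set c : ℝ := W Fp - W Fm with hc
  have hline : ∀ s : ℝ, Fm + s • H = Fm + s • vecMulVec a n := by
    intro s; rw [← hcomp]
  have hconv : ConvexOn ℝ Set.univ (fun s : ℝ => Q (Fm + s • H)) := by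
    have := hr1 Fm a n
    simpa [← hline] using this
  have hf : ∀ s ∈ Set.Icc (0:ℝ) 1, Q (Fm + s • H) = s * W Fp + (1 - s) * W Fm := by
    intro s hs
    have := haff s hs
    have hpt : s • Fp + (1 - s) • Fm = Fm + s • H := by
      rw [hH]; module
    rw [hpt] at this; exact this
  -- key: for all s, Q (Fm + s•H) ≥ s WFp + (1-s) WFm
  have key : ∀ s : ℝ, s * W Fp + (1 - s) * W Fm ≤ Q (Fm + s • H) := by
    intro s
    rcases le_or_gt s 0 with h0 | h0
    · rcases eq_or_lt_of_le h0 with h0 | h0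
      · subst h0; rw [hf 0 (by norm_num)]
      -- s < 0 : 0 = θ•s + (1-θ)•1 with θ = 1/(1-s)
      · have hden : (0:ℝ) < 1 - s := by linarith
        set θ : ℝ := 1 / (1 - s) with hθ
        have hθpos : 0 < θ := by positivity
        have hθle : θ ≤ 1 := by
          rw [hθ, div_le_one hden]; linarith
        have hcomb : θ • s + (1 - θ) • (1:ℝ) = 0 := by
          have h' : θ * (1 - s) = 1 := by rw [hθ]; exact one_div_mul_cancel hden.ne'
          rw [smul_eq_mul, smul_eq_mul]; linarith
        have hb : (0:ℝ) ≤ 1 - θ := by linarith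
        have hab : θ + (1 - θ) = 1 := by ring
        have := hconv.2 (Set.mem_univ s) (Set.mem_univ 1) hθpos.le hb hab
        simp only [smul_eq_mul, mul_one] at this
        have hcomb' : θ * s + (1 - θ) = 0 := by
          have := hcomb; simpa [smul_eq_mul] using this
        rw [show (θ * s + (1 - θ)) = (0:ℝ) from hcomb'] at this
        have hf0 : Q (Fm + (0:ℝ) • H) = W Fm := by
          rw [hf 0 (by norm_num)]; ring
        have hf1 : Q (Fm + (1:ℝ) • H) = W Fp := by
          rw [hf 1 (by norm_num)]; ring
        rw [hf0, hf1] at this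
        -- this : W Fm ≤ θ * Q (Fm + s•H) + (1-θ) * W Fp
        have hθval : θ * (1 - s) = 1 := by
          rw [hθ]; exact one_div_mul_cancel hden.ne'
        have h2 := mul_le_mul_of_nonneg_left this hden.le
        have e : (1 - s) * (θ * Q (Fm + s • H) + (1 - θ) * W Fp)
            = (θ * (1 - s)) * Q (Fm + s • H) + ((1 - s) - θ * (1 - s)) * W Fp := by
          ring
        rw [e, hθval] at h2
        linarith
    · rcases le_or_gt s 1 with h1 | h1
      · rw [hf s ⟨h0.le, h1⟩]
      -- s > 1 : 1 = θ•s + (1-θ)•0 with θ = 1/s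
      · have hspos : (0:ℝ) < s := by linarith
        set θ : ℝ := 1 / s with hθ
        have hθpos : 0 < θ := by positivity
        have hθle : θ ≤ 1 := by
          rw [hθ, div_le_one hspos]; linarith
        have hθs : θ * s = 1 := by rw [hθ]; exact one_div_mul_cancel hspos.ne'
        have hb : (0:ℝ) ≤ 1 - θ := by linarith
        have hab : θ + (1 - θ) = 1 := by ring
        have := hconv.2 (Set.mem_univ s) (Set.mem_univ 0) hθpos.le hb hab
        simp only [smul_eq_mul, mul_zero, add_zero] at this
        rw [hθs] at this
        have hf0 : Q (Fm + (0:ℝ) • H) = W Fm := by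
          rw [hf 0 (by norm_num)]; ring
        have hf1 : Q (Fm + (1:ℝ) • H) = W Fp := by
          rw [hf 1 (by norm_num)]; ring
        rw [hf0, hf1] at this
        have h2 := mul_le_mul_of_nonneg_left this hspos.le
        have e : s * (θ * Q (Fm + s • H) + (1 - θ) * W Fm)
            = (θ * s) * Q (Fm + s • H) + (s - θ * s) * W Fm := by
          ring
        rw [e, hθs] at h2
        linarith
  -- lower bound on W along the line
  have keyW : ∀ s : ℝ, W Fm + s * c ≤ W (Fm + s • H) := by
    intro s
    have := le_trans (key s) (hle _)
    rw [hc]; linarith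
  -- derivative at Fm
  have hder_m : frob (P Fm) H = c := by
    have hψ : HasDerivAt (fun t : ℝ => W (Fm + t • H) - (W Fm + t * c))
        (frob (P Fm) H - c) 0 := by
      have h1 := hP Fm H
      have h2 : HasDerivAt (fun t : ℝ => W Fm + t * c) c 0 := by
        simpa using (hasDerivAt_id (0:ℝ)).mul_const c |>.const_add (W Fm)
      exact h1.sub h2
    have hmin : IsLocalMin (fun t : ℝ => W (Fm + t • H) - (W Fm + t * c)) 0 := by
      apply Filter.Eventually.of_forall
      intro t
      have := keyW t
      simp only
      have h0 : ((0:ℝ) • H) = 0 := zero_smul _ _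
      rw [h0, add_zero]
      linarith
    have := hmin.hasDerivAt_eq_zero hψ
    linarith
  -- derivative at Fp
  have hFp : ∀ t : ℝ, Fp + t • H = Fm + (1 + t) • H := by
    intro t; rw [hH]; module
  have hder_p : frob (P Fp) H = c := by
    have hψ : HasDerivAt (fun t : ℝ => W (Fp + t • H) - (W Fp + t * c))
        (frob (P Fp) H - c) 0 := by
      have h1 := hP Fp H
      have h2 : HasDerivAt (fun t : ℝ => W Fp + t * c) c 0 := by
        simpa using (hasDerivAt_id (0:ℝ)).mul_const c |>.const_add (W Fp)
      exact h1.sub h2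
    have hmin : IsLocalMin (fun t : ℝ => W (Fp + t • H) - (W Fp + t * c)) 0 := by
      apply Filter.Eventually.of_forall
      intro t
      have h1 := keyW (1 + t)
      rw [← hFp t] at h1
      simp only
      have h0 : ((0:ℝ) • H) = 0 := zero_smul _ _
      rw [h0, add_zero]
      rw [hc] at h1 ⊢
      linarith
    have := hmin.hasDerivAt_eq_zero hψ
    linarith
  refine ⟨hder_p, hder_m, ?_, ?_⟩
  · rw [frob_sub_left, hder_p, hder_m]; ring
  · rw [frob_smul_left, frob_add_left, hder_p, hder_m]; ring
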